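/- Let μ be a probability measure on a countable-product configuration space Ω = E^S. If for all Δ ⊆ Λ finite, all configurations u on Δ with μ(σ_Δ = u) > 0, and almost all ω, τ: |μ_Λ^ω(σ_Δ=u) − μ_Λ^τ(σ_Δ=u)| ≤ δ(Δ,Λ)·μ_Λ^τ(σ_Δ=u), then for every event B ∈ F_{Λᶜ} with μ(B) > 0: |μ(σ_Δ=u | B) − μ(σ_Δ=u)| ≤ δ(Δ,Λ)·μ(σ_Δ=u). -/

import Mathlib

open MeasureTheory

/-- The σ-algebra on the configuration space `E^S` generated by the coordinates
in `Λ ⊆ S`. -/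
def cylAlg (S E : Type*) [MeasurableSpace E] (Λ : Set S) :
    MeasurableSpace (S → E) :=
  MeasurableSpace.comap (fun ω (i : Λ) => ω i) MeasurableSpace.pi

/-- The cylinder event `{σ_Δ = u}`. -/
def cylEvent {S E : Type*} (Δ : Set S) (u : Δ → E) : Set (S → E) :=
  {ω | ∀ i : Δ, ω i = u i}

open Set ENNReal in
lemma cylkey {Ω : Type*} [MeasurableSpace Ω] (μ : Measure Ω) [IsProbabilityMeasure μ]
    (f : Ω → ℝ≥0∞) (A B : Set Ω) (hBm : MeasurableSet B)
    (htot : μ A = ∫⁻ ω, f ω ∂μ)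
    (hABeq : μ (A ∩ B) = ∫⁻ ω in B, f ω ∂μ)
    (hABc : μ (A ∩ Bᶜ) = ∫⁻ ω in Bᶜ, f ω ∂μ)
    (d : ℝ) (hd : 0 ≤ d)
    (hμA : 0 < μ A) (hμB : 0 < μ B)
    (H : ∀ᵐ ω ∂μ, ∀ᵐ τ ∂μ, |(f ω).toReal - (f τ).toReal| ≤ d * (f τ).toReal) :
    |(μ (A ∩ B)).toReal / (μ B).toReal - (μ A).toReal| ≤ d * (μ A).toReal := by
  set g : Ω → ℝ≥0∞ := fun ω => ENNReal.ofReal (f ω).toReal with hgdef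
  have hgf : ∀ ω, g ω ≤ f ω := fun ω => ENNReal.ofReal_toReal_le
  set c : ℝ≥0∞ := ∫⁻ ω, g ω ∂μ with hcdef
  have hca : c ≤ μ A := htot ▸ lintegral_mono hgf
  have haT : μ A ≠ ∞ := measure_ne_top μ A
  -- upper a.e. bound on g
  have L1 : ∀ᵐ ω ∂μ, g ω ≤ ENNReal.ofReal (1 + d) * c := by
    filter_upwards [H] with ω hω
    have h1 : ∀ᵐ τ ∂μ, g ω ≤ ENNReal.ofReal (1 + d) * g τ := by
      filter_upwards [hω] with τ hτ
      have h2 : (f ω).toReal ≤ (1 + d) * (f τ).toReal := by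
        have := (abs_le.mp hτ).2; nlinarith
      calc g ω ≤ ENNReal.ofReal ((1 + d) * (f τ).toReal) := ENNReal.ofReal_le_ofReal h2
        _ = ENNReal.ofReal (1 + d) * g τ := ENNReal.ofReal_mul (by linarith)
    calc g ω = ∫⁻ _, g ω ∂μ := by simp
      _ ≤ ∫⁻ τ, ENNReal.ofReal (1 + d) * g τ ∂μ := lintegral_mono_ae h1
      _ = ENNReal.ofReal (1 + d) * c := lintegral_const_mul' _ _ ENNReal.ofReal_ne_top
  -- lower a.e. bound on g
  have L2 : ∀ᵐ ω ∂μ, ENNReal.ofReal (1 - d) * c ≤ g ω := by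
    rcases le_or_gt (1 - d) 0 with h0 | h0
    · filter_upwards with ω; simp [ENNReal.ofReal_eq_zero.mpr h0]
    · filter_upwards [H] with ω hω
      have h1 : ∀ᵐ τ ∂μ, ENNReal.ofReal (1 - d) * g τ ≤ g ω := by
        filter_upwards [hω] with τ hτ
        have h2 : (1 - d) * (f τ).toReal ≤ (f ω).toReal := by
          have := (abs_le.mp hτ).1; nlinarith
        calc ENNReal.ofReal (1 - d) * g τ = ENNReal.ofReal ((1 - d) * (f τ).toReal) :=
              (ENNReal.ofReal_mul h0.le).symm
          _ ≤ g ω := ENNReal.ofReal_le_ofReal h2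
      calc ENNReal.ofReal (1 - d) * c = ∫⁻ τ, ENNReal.ofReal (1 - d) * g τ ∂μ :=
            (lintegral_const_mul' _ _ ENNReal.ofReal_ne_top).symm
        _ ≤ ∫⁻ _, g ω ∂μ := lintegral_mono_ae h1
        _ = g ω := by simp
  -- measurable minorant
  obtain ⟨f₀, hf₀m, hf₀le, hf₀int⟩ := exists_measurable_le_lintegral_eq (μ := μ) f
  -- f₀ satisfies a.e. the upper bound
  have hW : ∀ᵐ ω ∂μ, f₀ ω ≤ ENNReal.ofReal (1 + d) * c := by
    set K := ENNReal.ofReal (1 + d) * c with hK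
    set W : Set Ω := {ω | K < f₀ ω} with hWdef
    have hWm : MeasurableSet W := measurableSet_lt measurable_const hf₀m
    have himp : ∀ᵐ ω ∂μ, ω ∈ W → f ω = ∞ := by
      filter_upwards [L1] with ω hω hmem
      by_contra hne
      have : f₀ ω ≤ K := le_trans (hf₀le ω) (le_trans (ENNReal.ofReal_toReal hne ▸ le_rfl : f ω ≤ g ω) hω)
      exact absurd this (not_le.mpr hmem)
    have hnull : μ (W \ {ω | f ω = ∞}) = 0 := by
      rw [ae_iff] at himp
      have hset : W \ {ω | f ω = ∞} = {a | ¬(a ∈ W → f a = ∞)} := by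
        ext ω
        simp [Set.mem_diff, _root_.not_imp, and_comm]
      rw [hset]
      exact himp
    set M : Set Ω := W ∩ (toMeasurable μ (W \ {ω | f ω = ∞}))ᶜ with hMdef
    have hMm : MeasurableSet M := hWm.inter (measurableSet_toMeasurable _ _).compl
    have hMsub : M ⊆ {ω | f ω = ∞} := by
      intro ω hω
      by_contra hne
      exact hω.2 (subset_toMeasurable _ _ ⟨hω.1, hne⟩)
    have hμM : μ M = 0 := by
      by_contra hne
      have h1 : (∞ : ℝ≥0∞) * μ M ≤ ∫⁻ ω, f ω ∂μ := by
        calc (∞ : ℝ≥0∞) * μ M = ∫⁻ _ in M, ∞ ∂μ := (setLIntegral_const _ _).symm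
          _ ≤ ∫⁻ ω in M, f ω ∂μ := lintegral_mono_ae (by
              filter_upwards [ae_restrict_mem hMm] with ω hω
              exact le_of_eq (hMsub hω).symm)
          _ ≤ ∫⁻ ω, f ω ∂μ := lintegral_mono' Measure.restrict_le_self le_rfl
      rw [ENNReal.top_mul hne] at h1
      exact haT (htot.trans (top_le_iff.mp h1) : μ A = ∞)
    have hμW : μ W = 0 := by
      have : W ⊆ M ∪ toMeasurable μ (W \ {ω | f ω = ∞}) := by
        intro ω hω
        by_cases hmem : ω ∈ toMeasurable μ (W \ {ω | f ω = ∞})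
        · exact Or.inr hmem
        · exact Or.inl ⟨hω, hmem⟩
      refine le_antisymm (le_trans (measure_mono this) ?_) zero_le
      calc μ (M ∪ _) ≤ μ M + μ (toMeasurable μ (W \ {ω | f ω = ∞})) := measure_union_le _ _
        _ = 0 := by rw [hμM, measure_toMeasurable, hnull, add_zero]
    rw [ae_iff]
    convert hμW using 2
    ext ω; simp [hWdef, not_le]
  -- the set-integral of f₀ computes conditional measures
  have hsplit : ∫⁻ ω in B, f₀ ω ∂μ = μ (A ∩ B) := by
    have h1 : ∫⁻ ω in B, f₀ ω ∂μ ≤ ∫⁻ ω in B, f ω ∂μ := lintegral_mono hf₀le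
    have h2 : ∫⁻ ω in Bᶜ, f₀ ω ∂μ ≤ ∫⁻ ω in Bᶜ, f ω ∂μ := lintegral_mono hf₀le
    have h3 : ∫⁻ ω in B, f₀ ω ∂μ + ∫⁻ ω in Bᶜ, f₀ ω ∂μ
        = ∫⁻ ω in B, f ω ∂μ + ∫⁻ ω in Bᶜ, f ω ∂μ := by
      rw [lintegral_add_compl _ hBm, lintegral_add_compl f hBm, ← hf₀int]
    have hfin : ∫⁻ ω in Bᶜ, f ω ∂μ ≠ ∞ := by rw [← hABc]; exact measure_ne_top μ _
    have h4 : ∫⁻ ω in B, f ω ∂μ ≤ ∫⁻ ω in B, f₀ ω ∂μ := by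
      have h5 : ∫⁻ ω in B, f ω ∂μ + ∫⁻ ω in Bᶜ, f ω ∂μ
          ≤ ∫⁻ ω in B, f₀ ω ∂μ + ∫⁻ ω in Bᶜ, f ω ∂μ := by
        rw [← h3]; exact add_le_add_right h2 _
      exact (ENNReal.add_le_add_iff_right hfin).mp h5
    rw [le_antisymm h1 h4, ← hABeq]
  -- upper bound
  have hupper : μ (A ∩ B) ≤ ENNReal.ofReal (1 + d) * μ A * μ B := by
    rw [← hsplit]
    calc ∫⁻ ω in B, f₀ ω ∂μ ≤ ∫⁻ _ in B, ENNReal.ofReal (1 + d) * c ∂μ :=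
          lintegral_mono_ae (ae_restrict_of_ae hW)
      _ = ENNReal.ofReal (1 + d) * c * μ B := setLIntegral_const _ _
      _ ≤ ENNReal.ofReal (1 + d) * μ A * μ B := by gcongr
  -- final arithmetic
  set P := (μ (A ∩ B)).toReal
  set Q := (μ B).toReal
  set Ma := (μ A).toReal
  have hQpos : 0 < Q := ENNReal.toReal_pos hμB.ne' (measure_ne_top μ B)
  have hMa : 0 ≤ Ma := ENNReal.toReal_nonneg
  have hup : P ≤ (1 + d) * Ma * Q := by
    have := ENNReal.toReal_mono
      (ENNReal.mul_ne_top (ENNReal.mul_ne_top ENNReal.ofReal_ne_top haT) (measure_ne_top μ B))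
      hupper
    rwa [ENNReal.toReal_mul, ENNReal.toReal_mul, ENNReal.toReal_ofReal (by linarith)] at this
  have hupQ : P / Q - Ma ≤ d * Ma := by
    have : P / Q ≤ (1 + d) * Ma := (div_le_iff₀ hQpos).mpr hup
    linarith
  have hlowQ : Ma - P / Q ≤ d * Ma := by
    rcases le_or_gt 1 d with hd1 | hd1
    · have : 0 ≤ P / Q := div_nonneg ENNReal.toReal_nonneg hQpos.le
      nlinarith
    · -- need f finite a.e. hence c = μ A
      have hae : ∀ᵐ ω ∂μ, f ω ≠ ∞ := by
        filter_upwards [H] with ω hω hfinf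
        have hzero : ∀ᵐ τ ∂μ, g τ = 0 := by
          filter_upwards [hω] with τ hτ
          rw [hfinf] at hτ
          simp only [ENNReal.toReal_top, zero_sub, abs_neg,
            abs_of_nonneg ENNReal.toReal_nonneg] at hτ
          have h0 : (f τ).toReal = 0 := by nlinarith [ENNReal.toReal_nonneg (a := f τ)]
          simp [hgdef, h0]
        have hc0 : c = 0 := by
          rw [hcdef, lintegral_congr_ae hzero, lintegral_zero]
        have ha0 : μ A = 0 := by
          have h6 : ∀ᵐ ω ∂μ, f₀ ω ≤ 0 := by
            filter_upwards [hW] with ω hω; simpa [hc0] using hω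
          have h7 : ∫⁻ ω, f₀ ω ∂μ = 0 :=
            le_antisymm (le_trans (lintegral_mono_ae h6) (by simp)) zero_le
          rw [htot, hf₀int, h7]
        exact hμA.ne' ha0
      have hgfa : f =ᵐ[μ] g := by
        filter_upwards [hae] with ω hω
        simp [hgdef, ENNReal.ofReal_toReal hω]
      have hceq : c = μ A := by rw [hcdef, ← lintegral_congr_ae hgfa, ← htot]
      have hlower : ENNReal.ofReal (1 - d) * μ A * μ B ≤ μ (A ∩ B) := by
        rw [hABeq]
        calc ENNReal.ofReal (1 - d) * μ A * μ B = ∫⁻ _ in B, ENNReal.ofReal (1 - d) * μ A ∂μ :=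
              (setLIntegral_const _ _).symm
          _ ≤ ∫⁻ ω in B, g ω ∂μ := lintegral_mono_ae (ae_restrict_of_ae (by
              filter_upwards [L2] with ω hω; rwa [hceq] at hω))
          _ ≤ ∫⁻ ω in B, f ω ∂μ := lintegral_mono hgf
      have hlow : (1 - d) * Ma * Q ≤ P := by
        have := ENNReal.toReal_mono (measure_ne_top μ (A ∩ B)) hlower
        rwa [ENNReal.toReal_mul, ENNReal.toReal_mul, ENNReal.toReal_ofReal (by linarith)] at this
      have : (1 - d) * Ma ≤ P / Q := (le_div_iff₀ hQpos).mpr hlow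
      linarith
  rw [abs_le]
  constructor <;> linarith

lemma cylAlg_le_pi (S E : Type*) [MeasurableSpace E] (Λ : Set S) :
    cylAlg S E Λ ≤ (MeasurableSpace.pi : MeasurableSpace (S → E)) :=
  measurable_iff_comap_le.mp
    (measurable_pi_lambda _ fun i => measurable_pi_apply _)

lemma cylEvent_mem_cylAlg {S E : Type*} [MeasurableSpace E] [MeasurableSingletonClass E]
    {Δ Λ : Set S} (hΔΛ : Δ ⊆ Λ) (hΔ : Δ.Countable) (u : Δ → E) :
    MeasurableSet[cylAlg S E Λ] (cylEvent Δ u) := by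
  haveI := hΔ.to_subtype
  refine ⟨⋂ i : Δ, (fun x : Λ → E => x ⟨i.1, hΔΛ i.2⟩) ⁻¹' {u i}, ?_, ?_⟩
  · exact MeasurableSet.iInter fun i =>
      (measurable_pi_apply _) (measurableSet_singleton _)
  · ext ω
    simp [cylEvent, Set.mem_iInter]

/-- Let `μ` be a probability measure on `Ω = E^S` with regular
conditional probabilities `μ_Λ^ω = κ Λ ω` given `F_{Λᶜ}`. If for all finite
`Δ ⊆ Λ`, all `u` with `μ(σ_Δ = u) > 0` and almost all `ω, τ` one has
`|μ_Λ^ω(σ_Δ=u) − μ_Λ^τ(σ_Δ=u)| ≤ δ(Δ,Λ)·μ_Λ^τ(σ_Δ=u)`, then for every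
`B ∈ F_{Λᶜ}` with `μ(B) > 0`:
`|μ(σ_Δ=u | B) − μ(σ_Δ=u)| ≤ δ(Δ,Λ)·μ(σ_Δ=u)`. -/
theorem conditional_ratio_bound_implies_psi_bound
    {S E : Type*} [Countable S] [Fintype E] [MeasurableSpace E]
    [MeasurableSingletonClass E]
    (μ : @Measure (S → E) MeasurableSpace.pi)
    (hprob : @IsProbabilityMeasure _ MeasurableSpace.pi μ)
    (κ : Set S → (S → E) → @Measure (S → E) MeasurableSpace.pi)
    (hdisint : ∀ (Λ : Set S) (A B : Set (S → E)),
      MeasurableSet[cylAlg S E Λ] A → MeasurableSet[cylAlg S E Λᶜ] B →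
      μ (A ∩ B) = ∫⁻ ω in B, κ Λ ω A ∂μ)
    (δ : Set S → Set S → ℝ) (hδ : ∀ Δ Λ, 0 ≤ δ Δ Λ)
    (hmix : ∀ (Δ Λ : Set S), Δ ⊆ Λ → Λ.Finite → ∀ u : Δ → E,
      0 < μ (cylEvent Δ u) →
      ∀ᵐ ω ∂μ, ∀ᵐ τ ∂μ,
        |(κ Λ ω (cylEvent Δ u)).toReal - (κ Λ τ (cylEvent Δ u)).toReal|
          ≤ δ Δ Λ * (κ Λ τ (cylEvent Δ u)).toReal) :
    ∀ (Δ Λ : Set S), Δ ⊆ Λ → Λ.Finite → ∀ u : Δ → E,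
      0 < μ (cylEvent Δ u) →
      ∀ B : Set (S → E), MeasurableSet[cylAlg S E Λᶜ] B → 0 < μ B →
        |(μ (cylEvent Δ u ∩ B)).toReal / (μ B).toReal - (μ (cylEvent Δ u)).toReal|
          ≤ δ Δ Λ * (μ (cylEvent Δ u)).toReal := by
  intro Δ Λ hΔΛ hΛ u hμA B hB hμB
  haveI := hprob
  have hA : MeasurableSet[cylAlg S E Λ] (cylEvent Δ u) :=
    cylEvent_mem_cylAlg hΔΛ ((hΛ.subset hΔΛ).countable) u
  have hBpi : MeasurableSet B := cylAlg_le_pi S E Λᶜ _ hB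
  have htot : μ (cylEvent Δ u) = ∫⁻ ω, κ Λ ω (cylEvent Δ u) ∂μ := by
    have h := hdisint Λ (cylEvent Δ u) Set.univ hA MeasurableSet.univ
    rwa [Set.inter_univ, setLIntegral_univ] at h
  exact cylkey μ (fun ω => κ Λ ω (cylEvent Δ u)) (cylEvent Δ u) B hBpi htot
    (hdisint Λ (cylEvent Δ u) B hA hB)
    (hdisint Λ (cylEvent Δ u) Bᶜ hA hB.compl)
    (δ Δ Λ) (hδ Δ Λ) hμA hμB (hmix Δ Λ hΔΛ hΛ u hμA)
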